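/- Let f_n = [z^n] z^2(z^3 - 2z^2 - 8)/(8(z-1)^3) (the second factorial moment E(X_n(X_n - 1))), and let e_n = 3n/4 for n ≥ 2. Then f_n + e_n - e_n^2 = n/16 for all n ≥ 3. -/

import Mathlib

open PowerSeries

private noncomputable def shelfG : PowerSeries ℚ :=
  PowerSeries.C (R := ℚ) (-1/8) * PowerSeries.mk fun n => ((2 + n).choose 2 : ℚ)

private lemma shelfG_coeff (k : ℕ) :
    PowerSeries.coeff (R := ℚ) k shelfG = -((k + 1) * (k + 2)) / 16 := by
  rw [shelfG, PowerSeries.coeff_C_mul, PowerSeries.coeff_mk, Nat.cast_choose_two]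
  push_cast
  ring

private lemma shelfG_inv : (8 * ((PowerSeries.X : PowerSeries ℚ) - 1) ^ 3)⁻¹ = shelfG := by
  rw [PowerSeries.inv_eq_iff_mul_eq_one]
  · have h := PowerSeries.mk_add_choose_mul_one_sub_pow_eq_one ℚ 2
    have key : shelfG * (8 * ((PowerSeries.X : PowerSeries ℚ) - 1) ^ 3)
        = PowerSeries.C (R := ℚ) (-1/8) * (-8) *
          ((PowerSeries.mk fun n => ((2 + n).choose 2 : ℚ)) * (1 - PowerSeries.X) ^ 3) := by
      rw [shelfG]; ring
    rw [key, h, mul_one, show ((-8 : PowerSeries ℚ)) = PowerSeries.C (R := ℚ) (-8) by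
      rw [map_neg, map_ofNat], ← map_mul]
    norm_num
  · simp [map_ofNat]

theorem shelf_guessing_variance :
    ∀ n : ℕ, 3 ≤ n →
      (PowerSeries.coeff (R := ℚ) n)
          ((PowerSeries.X ^ 2 * (PowerSeries.X ^ 3 - 2 * PowerSeries.X ^ 2 - 8))
            * (8 * (PowerSeries.X - 1) ^ 3)⁻¹)
        + 3 * n / 4 - (3 * n / 4) ^ 2 = n / 16 := by
  intro n hn
  rw [shelfG_inv]
  have key : (PowerSeries.X ^ 2 * (PowerSeries.X ^ 3 - 2 * PowerSeries.X ^ 2 - 8)) * shelfG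
      = PowerSeries.X ^ 5 * shelfG - PowerSeries.C (R := ℚ) 2 * (PowerSeries.X ^ 4 * shelfG)
        - PowerSeries.C (R := ℚ) 8 * (PowerSeries.X ^ 2 * shelfG) := by
    rw [map_ofNat, map_ofNat]; ring
  rw [key, map_sub, map_sub, PowerSeries.coeff_C_mul, PowerSeries.coeff_C_mul,
    PowerSeries.coeff_X_pow_mul', PowerSeries.coeff_X_pow_mul',
    PowerSeries.coeff_X_pow_mul']
  match n, hn with
  | 3, _ =>
    norm_num [shelfG_coeff]
  | 4, _ =>
    norm_num [shelfG_coeff]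
  | (m + 5), _ =>
    have h5 : 5 ≤ m + 5 := by omega
    have h4 : 4 ≤ m + 5 := by omega
    have h2 : 2 ≤ m + 5 := by omega
    rw [if_pos h5, if_pos h4, if_pos h2,
      show m + 5 - 5 = m from by omega, show m + 5 - 4 = m + 1 from by omega,
      show m + 5 - 2 = m + 3 from by omega, shelfG_coeff, shelfG_coeff, shelfG_coeff]
    push_cast
    ring
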